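/- Rice's integral representation: Let n ≥ 1 be an integer, let c = (n+1)/2 and let ρ be a real number with (n-1)/2 < ρ < (n+1)/2 (so the circle of radius ρ centered at c encloses the points 1, 2, …, n but not 0). If f : ℂ → ℂ is complex differentiable on the closed ball of radius ρ centered at c, then Σ_{k=1}^n C(n,k) (-1)^k f(k) = -(1/(2πi)) ∮_{|z-c|=ρ} [(-1)^{n-1} n! / (z(z-1)(z-2)⋯(z-n))] · f(z) dz, where the integral is the counterclockwise circle integral. -/

import Mathlib

open scoped Real
open Finset Metric

lemma rice_pf (n : ℕ) : ∀ z : ℂ, (∀ j ∈ Finset.range (n+1), z ≠ (j:ℂ)) →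
    ∑ k ∈ Finset.range (n+1), ((-1:ℂ)^k * (n.choose k)) / (z - k) =
      (-1:ℂ)^n * n.factorial / ∏ j ∈ Finset.range (n+1), (z - j) := by
  induction n with
  | zero => intro z hz; simp
  | succ n ih =>
    intro z hz
    have hz'' : ∀ j ∈ Finset.range (n+1), z ≠ (j:ℂ) := fun j hj =>
      hz j (Finset.mem_range.mpr (Nat.lt_succ_of_lt (Finset.mem_range.mp hj)))
    have hz' : ∀ j ∈ Finset.range (n+1), z - 1 ≠ (j:ℂ) := by
      intro j hj h
      have h2 := hz (j+1) (by simpa using Nat.succ_lt_succ (Finset.mem_range.mp hj))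
      apply h2
      push_cast
      linear_combination h
    have IH1 := ih z hz''
    have IH2 := ih (z-1) hz'
    have step : ∑ k ∈ range (n+2), ((-1:ℂ)^k * (((n+1).choose k : ℕ) : ℂ))/(z-k)
        = (∑ k ∈ range (n+2), ((-1:ℂ)^k * ((n.choose k : ℕ) : ℂ))/(z-k))
          - (∑ k ∈ range (n+1), ((-1:ℂ)^k * ((n.choose k : ℕ) : ℂ))/((z-1)-k)) := by
      rw [Finset.sum_range_succ' (fun k => ((-1:ℂ)^k * (((n+1).choose k : ℕ) : ℂ))/(z-k)) (n+1),
        Finset.sum_range_succ' (fun k => ((-1:ℂ)^k * ((n.choose k : ℕ) : ℂ))/(z-k)) (n+1)]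
      have tw : ∀ k ∈ range (n+1),
          (-1:ℂ)^(k+1) * (((n+1).choose (k+1) : ℕ) : ℂ)/(z - ((k+1:ℕ):ℂ))
            = (-1:ℂ)^(k+1) * ((n.choose (k+1) : ℕ) : ℂ)/(z - ((k+1:ℕ):ℂ))
              - (-1:ℂ)^k * ((n.choose k : ℕ) : ℂ)/((z-1) - (k:ℂ)) := by
        intro k hk
        rw [Nat.choose_succ_succ]
        push_cast
        ring
      rw [Finset.sum_congr rfl tw, Finset.sum_sub_distrib]
      simp [Nat.choose_zero_right]
      ring
    have drop : ∑ k ∈ range (n+2), ((-1:ℂ)^k * ((n.choose k : ℕ) : ℂ))/(z-k)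
        = ∑ k ∈ range (n+1), ((-1:ℂ)^k * ((n.choose k : ℕ) : ℂ))/(z-k) := by
      rw [Finset.sum_range_succ]
      simp [Nat.choose_succ_self]
    have hP1 : (∏ j ∈ range (n+1), (z - (j:ℂ))) ≠ 0 :=
      Finset.prod_ne_zero_iff.mpr fun j hj => sub_ne_zero.mpr (hz'' j hj)
    have hzn : z - (((n+1:ℕ)):ℂ) ≠ 0 :=
      sub_ne_zero.mpr (hz (n+1) (Finset.self_mem_range_succ _))
    have hz0 : z ≠ 0 := by
      have := hz 0 (Finset.mem_range.mpr (Nat.succ_pos _))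
      simpa using this
    have e1 : ∏ j ∈ range (n+2), (z - (j:ℂ))
        = (∏ j ∈ range (n+1), (z - (j:ℂ))) * (z - (((n+1:ℕ)):ℂ)) :=
      Finset.prod_range_succ _ _
    have e2 : ∏ j ∈ range (n+2), (z - (j:ℂ))
        = (∏ j ∈ range (n+1), (z - 1 - (j:ℂ))) * z := by
      rw [Finset.prod_range_succ' (fun j => z - (j:ℂ)) (n+1)]
      simp only [Nat.cast_zero, sub_zero]
      congr 1
      refine Finset.prod_congr rfl fun j hj => ?_
      push_cast
      ring
    have eA : (-1:ℂ)^n * (n.factorial : ℂ) / (∏ j ∈ range (n+1), (z - (j:ℂ)))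
        = ((-1:ℂ)^n * (n.factorial : ℂ) * (z - (((n+1:ℕ)):ℂ))) / ∏ j ∈ range (n+2), (z - (j:ℂ)) := by
      rw [e1, mul_div_mul_right _ _ hzn]
    have eB : (-1:ℂ)^n * (n.factorial : ℂ) / (∏ j ∈ range (n+1), (z - 1 - (j:ℂ)))
        = ((-1:ℂ)^n * (n.factorial : ℂ) * z) / ∏ j ∈ range (n+2), (z - (j:ℂ)) := by
      rw [e2, mul_div_mul_right _ _ hz0]
    rw [step, drop, IH1, IH2, eA, eB, div_sub_div_same]
    congr 1
    rw [Nat.factorial_succ]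
    push_cast
    ring

lemma rice_circleIntegral_finset_sum {ι : Type*} (s : Finset ι) (F : ι → ℂ → ℂ) {c : ℂ} {R : ℝ}
    (h : ∀ i ∈ s, CircleIntegrable (F i) c R) :
    (∮ z in C(c, R), ∑ i ∈ s, F i z) = ∑ i ∈ s, ∮ z in C(c, R), F i z := by
  simp only [circleIntegral, Finset.smul_sum]
  exact intervalIntegral.integral_finset_sum fun i hi => (h i hi).out

theorem rice_integral_representation (n : ℕ) (hn : 1 ≤ n)
    (c : ℂ) (hc : c = (n + 1) / 2)
    (ρ : ℝ) (hρ₁ : ((n : ℝ) - 1) / 2 < ρ) (hρ₂ : ρ < ((n : ℝ) + 1) / 2)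
    (f : ℂ → ℂ) (hf : DifferentiableOn ℂ f (Metric.closedBall c ρ)) :
    ∑ k ∈ Finset.Icc 1 n, (n.choose k : ℂ) * (-1) ^ k * f k =
      -(1 / (2 * Real.pi * Complex.I)) *
        ∮ z in C(c, ρ),
          ((-1) ^ (n - 1) * (n.factorial : ℂ) / ∏ j ∈ Finset.range (n + 1), (z - j)) * f z := by
  have hn1 : (1:ℝ) ≤ (n:ℝ) := by exact_mod_cast hn
  have hρ0 : 0 < ρ := lt_of_le_of_lt (by linarith) hρ₁
  have habs : ∀ j : ℕ, ‖(j:ℂ) - c‖ = |(j:ℝ) - ((n:ℝ)+1)/2| := by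
    intro j
    rw [hc, show (j:ℂ) - ((n:ℂ)+1)/2 = (((j:ℝ) - ((n:ℝ)+1)/2 : ℝ) : ℂ) by push_cast; ring,
      Complex.norm_real, Real.norm_eq_abs]
  have hball : ∀ j ∈ Finset.Icc 1 n, (j:ℂ) ∈ ball c ρ := by
    intro j hj
    obtain ⟨h1, h2⟩ := Finset.mem_Icc.mp hj
    have h1' : (1:ℝ) ≤ (j:ℝ) := by exact_mod_cast h1
    have h2' : (j:ℝ) ≤ (n:ℝ) := by exact_mod_cast h2
    rw [mem_ball, Complex.dist_eq, habs]
    have : |(j:ℝ) - ((n:ℝ)+1)/2| ≤ ((n:ℝ)-1)/2 := abs_le.mpr ⟨by linarith, by linarith⟩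
    linarith
  have h0 : (0:ℂ) ∉ closedBall c ρ := by
    rw [mem_closedBall, Complex.dist_eq, show (0:ℂ) - c = -c by ring, norm_neg, hc,
      show ((n:ℂ)+1)/2 = ((((n:ℝ)+1)/2 : ℝ) : ℂ) by push_cast; ring, Complex.norm_real, Real.norm_eq_abs,
      abs_of_nonneg (by linarith)]
    linarith
  have hsphere : ∀ z ∈ sphere c ρ, ∀ j ∈ Finset.range (n+1), z ≠ (j:ℂ) := by
    intro z hzs j hj heq
    rw [heq] at hzs
    rcases Nat.eq_zero_or_pos j with h0j | h1j
    · subst h0j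
      exact h0 (by simpa using sphere_subset_closedBall hzs)
    · have hb := hball j (Finset.mem_Icc.mpr ⟨h1j, Nat.lt_succ_iff.mp (Finset.mem_range.mp hj)⟩)
      rw [mem_ball] at hb
      rw [mem_sphere] at hzs
      exact absurd hzs (ne_of_lt hb)
  set a : ℕ → ℂ := fun k => -((-1:ℂ)^k * (n.choose k)) with ha
  have hone : (-1:ℂ)^(n-1) = -(-1:ℂ)^n := by
    obtain ⟨m, rfl⟩ := Nat.exists_eq_add_of_le hn
    rw [show 1 + m - 1 = m by omega, pow_add]
    ring
  -- step 1: rewrite the integrand on the sphere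
  have hcongr : (∮ z in C(c,ρ), ((-1:ℂ)^(n-1) * (n.factorial : ℂ) / ∏ j ∈ Finset.range (n+1), (z-(j:ℂ))) * f z)
      = ∮ z in C(c,ρ), ∑ k ∈ Finset.range (n+1), a k * ((z - (k:ℂ))⁻¹ * f z) := by
    apply circleIntegral.integral_congr hρ0.le
    intro z hzs
    have hpf := rice_pf n z (hsphere z hzs)
    have key : (∑ k ∈ Finset.range (n+1), a k * (z-(k:ℂ))⁻¹)
        = (-1:ℂ)^(n-1) * (n.factorial : ℂ) / ∏ j ∈ Finset.range (n+1), (z-(j:ℂ)) := by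
      rw [hone, show -(-1:ℂ)^n * (n.factorial : ℂ) / ∏ j ∈ Finset.range (n+1), (z-(j:ℂ))
          = -((-1:ℂ)^n * (n.factorial : ℂ) / ∏ j ∈ Finset.range (n+1), (z-(j:ℂ))) by ring,
        ← hpf, ← Finset.sum_neg_distrib]
      exact Finset.sum_congr rfl fun k _ => by rw [ha]; simp [div_eq_mul_inv]
    simp only
    rw [← key, Finset.sum_mul]
    exact Finset.sum_congr rfl fun k _ => by ring
  -- integrability of each summand
  have hfc : ContinuousOn f (sphere c ρ) := hf.continuousOn.mono sphere_subset_closedBall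
  have hintg : ∀ k ∈ Finset.range (n+1),
      CircleIntegrable (fun z => a k * ((z - (k:ℂ))⁻¹ * f z)) c ρ := by
    intro k hk
    apply ContinuousOn.circleIntegrable hρ0.le
    apply continuousOn_const.mul
    apply ContinuousOn.mul _ hfc
    exact ((continuousOn_id.sub continuousOn_const).inv₀
      fun z hz => sub_ne_zero.mpr (hsphere z hz k hk))
  rw [hcongr, rice_circleIntegral_finset_sum _ _ hintg]
  -- split off k = 0
  have hsplit : Finset.range (n+1) = insert 0 (Finset.Icc 1 n) := by
    ext x
    simp [Nat.lt_succ_iff]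
    omega
  rw [hsplit, Finset.sum_insert (by simp)]
  -- the k = 0 integral vanishes
  have hzero : (∮ z in C(c,ρ), a 0 * ((z - ((0:ℕ):ℂ))⁻¹ * f z)) = 0 := by
    have hd : DifferentiableOn ℂ (fun z => a 0 * ((z - ((0:ℕ):ℂ))⁻¹ * f z)) (closedBall c ρ) := by
      apply DifferentiableOn.const_mul
      apply DifferentiableOn.mul _ hf
      apply DifferentiableOn.inv
      · exact (differentiableOn_id.sub (differentiableOn_const _))
      · intro z hz hne
        apply h0
        have : z = 0 := by simpa using sub_eq_zero.mp hne
        rwa [this] at hz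
    apply Complex.circleIntegral_eq_zero_of_differentiable_on_off_countable hρ0.le
      Set.countable_empty hd.continuousOn
    intro z hz
    exact (hd z (ball_subset_closedBall hz.1)).differentiableAt
      (mem_nhds_iff.mpr ⟨ball c ρ, ball_subset_closedBall, isOpen_ball, hz.1⟩)
  rw [hzero, zero_add]
  -- evaluate the k ∈ [1, n] integrals via Cauchy's formula
  have hval : ∀ k ∈ Finset.Icc 1 n,
      (∮ z in C(c,ρ), a k * ((z - (k:ℂ))⁻¹ * f z)) = a k * (2 * (π:ℂ) * Complex.I * f k) := by
    intro k hk
    have hs : (∮ z in C(c,ρ), a k * ((z - (k:ℂ))⁻¹ * f z))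
        = a k * ∮ z in C(c,ρ), (z - (k:ℂ))⁻¹ * f z := by
      have := circleIntegral.integral_smul (a k) (fun z => (z - (k:ℂ))⁻¹ * f z) c ρ
      simpa [smul_eq_mul] using this
    have hcau := hf.circleIntegral_sub_inv_smul (hball k hk)
    have hc2 : (∮ z in C(c,ρ), (z - (k:ℂ))⁻¹ * f z) = 2*(π:ℂ)*Complex.I * f k := by
      simpa [smul_eq_mul, mul_assoc] using hcau
    rw [hs, hc2]
  rw [Finset.sum_congr rfl hval]
  -- final algebra
  have h2πI : (2 * (π:ℂ) * Complex.I) ≠ 0 := by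
    simp [Real.pi_ne_zero, Complex.I_ne_zero]
  rw [Finset.mul_sum]
  refine Finset.sum_congr rfl fun k _ => ?_
  rw [ha]
  field_simp
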